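/- arXiv:math/0512107 — 4 statements merged into one kernel-verified Lean document; each statement's English description precedes it below -/
import Mathlib

section
/- For every natural number n ≥ 1, the n-th power of U_1 decomposes into Chebyshev polynomials of the second kind as (U_1(X))^n = ∑_{i=0}^{⌊n/2⌋} (C(n,i) − C(n,i−1)) · U_{n−2i}(X) in ℤ[X], where C(n,i) denotes the binomial coefficient and C(n,−1) = 0. (This is the decomposition of the n-th tensor power of the two-dimensional irreducible representation of SU(2), expressed in characters: χ_{1/2}^n = ∑ [C(n,i) − C(n,i−1)] χ_{n/2−i}.) -/
open Polynomial Finset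

private def aa (n i : ℕ) : ℤ :=
  (n.choose i : ℤ) - if i = 0 then 0 else (n.choose (i - 1) : ℤ)

private noncomputable def term (n i : ℕ) : Polynomial ℤ :=
  Polynomial.C (aa n i) * Polynomial.Chebyshev.U ℤ ((n : ℤ) - 2 * (i : ℤ))

private lemma pascal (n j : ℕ) :
    aa (n + 1) j = aa n j + (if j = 0 then 0 else aa n (j - 1)) := by
  rcases j with _ | j
  · simp [aa]
  · rcases j with _ | j
    · simp only [aa, if_neg (Nat.succ_ne_zero 0), Nat.succ_sub_one, if_pos rfl,
        Nat.choose_zero_right, Nat.choose_one_right]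
      push_cast
      rw [Nat.choose_one_right, Nat.choose_one_right]
      push_cast
      ring
    · simp only [aa, if_neg (Nat.succ_ne_zero _), Nat.succ_sub_one]
      rw [Nat.choose_succ_succ (n := n) (k := j + 1), Nat.choose_succ_succ (n := n) (k := j)]
      push_cast
      ring

private lemma two_X_mul (m : ℤ) :
    (Polynomial.Chebyshev.U ℤ 1) * Polynomial.Chebyshev.U ℤ m =
      Polynomial.Chebyshev.U ℤ (m + 1) + Polynomial.Chebyshev.U ℤ (m - 1) := by
  rw [Polynomial.Chebyshev.U_one]
  linear_combination -Polynomial.Chebyshev.U_sub_one ℤ m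

private lemma Tn_eq (n : ℕ) :
    ∑ i ∈ Finset.range (n + 2), term n i = 2 * (Polynomial.Chebyshev.U ℤ 1) ^ n := by
  induction n with
  | zero =>
      have h2 : Polynomial.Chebyshev.U ℤ ((0 : ℤ) - 2 * (1 : ℤ)) = -1 := by
        norm_num [Polynomial.Chebyshev.U_neg_two]
      norm_num [term, aa, Finset.sum_range_succ, h2]
  | succ n ih =>
      have step : ∑ i ∈ Finset.range (n + 1 + 2), term (n + 1) i =
          (Polynomial.Chebyshev.U ℤ 1) * ∑ i ∈ Finset.range (n + 2), term n i := by
        rw [Finset.mul_sum]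
        have lhs_eq : ∀ j ∈ Finset.range (n + 3),
            term (n + 1) j =
              Polynomial.C (aa n j) * Polynomial.Chebyshev.U ℤ ((n : ℤ) + 1 - 2 * j)
              + Polynomial.C (if j = 0 then 0 else aa n (j - 1)) *
                  Polynomial.Chebyshev.U ℤ ((n : ℤ) + 1 - 2 * j) := by
          intro j _
          rw [term, pascal, map_add, add_mul]
          have : ((n : ℤ) + 1) - 2 * j = ((n + 1 : ℕ) : ℤ) - 2 * j := by push_cast; ring
          rw [this]
        rw [Finset.sum_congr rfl lhs_eq, Finset.sum_add_distrib]
        have rhs_eq : ∀ i ∈ Finset.range (n + 2),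
            (Polynomial.Chebyshev.U ℤ 1) * term n i =
              Polynomial.C (aa n i) * Polynomial.Chebyshev.U ℤ ((n : ℤ) + 1 - 2 * i)
              + Polynomial.C (aa n i) * Polynomial.Chebyshev.U ℤ ((n : ℤ) - 1 - 2 * i) := by
          intro i _
          rw [term, mul_left_comm, two_X_mul, mul_add]
          congr 3 <;> ring
        rw [Finset.sum_congr rfl rhs_eq, Finset.sum_add_distrib]
        congr 1
        · -- first sums: range (n+3) vs range (n+2); top term is zero
          rw [show n + 3 = (n + 2) + 1 from rfl, Finset.sum_range_succ]
          have : aa n (n + 2) = 0 := by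
            simp [aa, Nat.choose_eq_zero_of_lt (by omega : n < n + 2),
              Nat.choose_eq_zero_of_lt (by omega : n < n + 1)]
          simp [this]
        · -- second sums: shift index
          rw [show n + 3 = (n + 2) + 1 from rfl, Finset.sum_range_succ']
          simp only [Nat.add_sub_cancel, if_neg (Nat.succ_ne_zero _), if_pos rfl, if_true,
            map_zero, zero_mul, add_zero]
          apply Finset.sum_congr rfl
          intro i _
          congr 2
          push_cast
          ring
      rw [step, ih]
      ring

private lemma aa_reflect (n j : ℕ) (hj : j ≤ n + 1) : aa n (n + 1 - j) = -aa n j := by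
  rcases Nat.eq_zero_or_pos j with rfl | hj1
  · simp [aa, Nat.choose_eq_zero_of_lt (by omega : n < n + 1)]
  · rcases Nat.lt_or_ge j (n + 1) with hj2 | hj2
    · have h1 : 1 ≤ n + 1 - j := by omega
      have h2 : n + 1 - j ≤ n := by omega
      have hja : j ≤ n := by omega
      rw [aa, aa, if_neg (by omega), if_neg (by omega)]
      have e1 : n.choose (n + 1 - j) = n.choose (j - 1) := by
        rw [← Nat.choose_symm h2]
        congr 1
        omega
      have e2 : n.choose (n + 1 - j - 1) = n.choose j := by
        rw [← Nat.choose_symm hja]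
        congr 1
        omega
      rw [e1, e2]
      ring
    · have : j = n + 1 := by omega
      subst this
      simp [aa, Nat.choose_eq_zero_of_lt (by omega : n < n + 1)]

private lemma term_reflect (n j : ℕ) (hj : j ≤ n + 1) : term n (n + 1 - j) = term n j := by
  have hcast : ((n : ℤ) - 2 * ((n + 1 - j : ℕ) : ℤ)) = -((n : ℤ) - 2 * j) - 2 := by
    have : ((n + 1 - j : ℕ) : ℤ) = (n : ℤ) + 1 - j := by omega
    rw [this]; ring
  rw [term, term, aa_reflect n j hj, hcast, Polynomial.Chebyshev.U_neg_sub_two, map_neg]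
  ring

/-- Decomposition of the `n`-th tensor power of the two-dimensional irreducible
representation of `SU(2)`, in terms of Chebyshev polynomials of the second kind:
`(U_1)^n = ∑_{i=0}^{⌊n/2⌋} (C(n,i) - C(n,i-1)) U_{n-2i}`, with the convention
`C(n,-1) = 0`. -/
theorem chebyshev_U_one_pow (n : ℕ) (hn : 1 ≤ n) :
    (Polynomial.Chebyshev.U ℤ 1) ^ n =
      ∑ i ∈ Finset.range (n / 2 + 1),
        Polynomial.C ((n.choose i : ℤ) - if i = 0 then 0 else (n.choose (i - 1) : ℤ)) *
          Polynomial.Chebyshev.U ℤ ((n : ℤ) - 2 * (i : ℤ)) := by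
  have hgoal : ∑ i ∈ Finset.range (n / 2 + 1),
      Polynomial.C ((n.choose i : ℤ) - if i = 0 then 0 else (n.choose (i - 1) : ℤ)) *
        Polynomial.Chebyshev.U ℤ ((n : ℤ) - 2 * (i : ℤ)) =
      ∑ i ∈ Finset.range (n / 2 + 1), term n i := rfl
  rw [hgoal]
  set m := n - n / 2 with hm
  have hsplit : ∑ i ∈ Finset.range (n + 2), term n i =
      (∑ i ∈ Finset.range (m + 1), term n i) +
        ∑ i ∈ Finset.Ico (m + 1) (n + 2), term n i := by
    rw [Finset.range_eq_Ico, ← Finset.sum_Ico_consecutive _ (by omega : 0 ≤ m + 1)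
      (by omega : m + 1 ≤ n + 2)]
    rw [Finset.range_eq_Ico]
  have hA : ∑ i ∈ Finset.range (m + 1), term n i = ∑ i ∈ Finset.range (n / 2 + 1), term n i := by
    rcases Nat.mod_two_eq_zero_or_one n with he | ho
    · have : m = n / 2 := by omega
      rw [this]
    · have hm' : m = n / 2 + 1 := by omega
      rw [hm', Finset.sum_range_succ]
      have hz : term n (n / 2 + 1) = 0 := by
        have hc : ((n : ℤ) - 2 * ((n / 2 + 1 : ℕ) : ℤ)) = -1 := by
          push_cast
          omega
        rw [term, hc, Polynomial.Chebyshev.U_neg_one, mul_zero]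
      rw [hz, add_zero]
  have hB : ∑ i ∈ Finset.Ico (m + 1) (n + 2), term n i =
      ∑ j ∈ Finset.range (n / 2 + 1), term n j := by
    refine Finset.sum_nbij' (fun i => n + 1 - i) (fun j => n + 1 - j) ?_ ?_ ?_ ?_ ?_
    · intro a ha
      simp only [Finset.mem_Ico, Finset.mem_range] at *
      omega
    · intro a ha
      simp only [Finset.mem_Ico, Finset.mem_range] at *
      omega
    · intro a ha
      simp only [Finset.mem_Ico] at ha
      show n + 1 - (n + 1 - a) = a
      omega
    · intro a ha
      simp only [Finset.mem_range] at ha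
      show n + 1 - (n + 1 - a) = a
      omega
    · intro a ha
      simp only [Finset.mem_Ico] at ha
      have h1 : n + 1 - a ≤ n + 1 := by omega
      have h2 : n + 1 - (n + 1 - a) = a := by omega
      rw [← term_reflect n (n + 1 - a) h1, h2]
  have h2 : (2 : Polynomial ℤ) * (Polynomial.Chebyshev.U ℤ 1) ^ n =
      2 * ∑ i ∈ Finset.range (n / 2 + 1), term n i := by
    rw [← Tn_eq n, hsplit, hA, hB]
    ring
  exact mul_left_cancel₀ (two_ne_zero) h2
end

section
/- Let G be a finite group and let χ, ψ, η, η′ be irreducible complex characters of G. If both η and η′ occur as constituents of the pointwise product χ·ψ, then η and η′ have the same central character: η(z)·η′(1) = η′(z)·η(1) for every z in the center Z(G). (This shows that the product ⟨χ⟩·⟨ψ⟩ = ⟨η⟩ on the chain group 𝓒(G), defined by picking any irreducible constituent η of χ·ψ, is well defined.) -/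
open CategoryTheory Finset

/-- The inner product of class functions on a finite group:
`⟨φ, η⟩ = (1/|G|) ∑ g, φ g * conj (η g)`, giving the multiplicity of an irreducible
character `η` in `φ`. -/
noncomputable def charMult (G : Type) [Group G] [Fintype G] (φ η : G → ℂ) : ℂ :=
  (Fintype.card G : ℂ)⁻¹ * ∑ g : G, φ g * (starRingEnd ℂ) (η g)

/-- `χ` is an irreducible complex character of `G`: the character of some irreducible
finite-dimensional complex representation of `G`. -/
def IsIrrChar (G : Type) [Group G] (χ : G → ℂ) : Prop :=
  ∃ V : FDRep ℂ G, Simple V ∧ χ = V.character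

lemma central_smul {G : Type} [Group G] (V : FDRep ℂ G) [Simple V] (z : G)
    (hz : z ∈ Subgroup.center G) :
    ∃ c : ℂ, ∀ g : G, V.character (z * g) = c * V.character g := by
  let f : V ⟶ V := ⟨FGModuleCat.ofHom (V.ρ z), by
    intro g
    ext v
    have := (Subgroup.mem_center_iff.mp hz g)
    show (V.ρ z * V.ρ g) v = (V.ρ g * V.ρ z) v
    rw [← map_mul, ← map_mul, this]⟩
  obtain ⟨c, hc⟩ := endomorphism_simple_eq_smul_id ℂ f
  refine ⟨c, fun g => ?_⟩
  have hρ : V.ρ z = c • LinearMap.id := (congrArg (fun f : V ⟶ V => f.hom.hom.hom) hc).symm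
  show LinearMap.trace ℂ V (V.ρ (z * g)) = _
  rw [map_mul, hρ]
  simp [FDRep.character, smul_mul_assoc, Module.End.mul_eq_comp, smul_eq_mul]

lemma irr_central_smul {G : Type} [Group G] {χ : G → ℂ} (h : IsIrrChar G χ) (z : G)
    (hz : z ∈ Subgroup.center G) : ∃ c : ℂ, ∀ g : G, χ (z * g) = c * χ g := by
  obtain ⟨V, hV, rfl⟩ := h
  exact central_smul V z hz

/-- If two irreducible characters `η` and `η'` both occur as constituents of the
pointwise product `χ · ψ` of irreducible characters, then `η` and `η'` have the same
central character.  Hence the product on the chain group `𝓒(G)` is well defined. -/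
theorem constituents_of_prod_same_central_character (G : Type) [Group G] [Fintype G]
    (χ ψ η η' : G → ℂ) (hχ : IsIrrChar G χ) (hψ : IsIrrChar G ψ)
    (hη : IsIrrChar G η) (hη' : IsIrrChar G η')
    (h1 : charMult G (fun g => χ g * ψ g) η ≠ 0)
    (h2 : charMult G (fun g => χ g * ψ g) η' ≠ 0) :
    ∀ z ∈ Subgroup.center G, η z * η' 1 = η' z * η 1 := by
  intro z hz
  obtain ⟨a, ha⟩ := irr_central_smul hχ z hz
  obtain ⟨b, hb⟩ := irr_central_smul hψ z hz
  obtain ⟨c, hc⟩ := irr_central_smul hη z hz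
  obtain ⟨d, hd⟩ := irr_central_smul hη' z hz
  have key : ∀ (θ : G → ℂ) (e : ℂ), (∀ g, θ (z * g) = e * θ g) →
      charMult G (fun g => χ g * ψ g) θ ≠ 0 →
      a * b * (starRingEnd ℂ) e = 1 := by
    intro θ e he hne
    set S : ℂ := ∑ g : G, χ g * ψ g * (starRingEnd ℂ) (θ g) with hS
    have hSne : S ≠ 0 := by
      intro h0
      apply hne
      simp [charMult, ← hS, h0]
    have hre : S = (a * b * (starRingEnd ℂ) e) * S := by
      calc S = ∑ g : G, χ (z * g) * ψ (z * g) * (starRingEnd ℂ) (θ (z * g)) := by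
              refine (Fintype.sum_equiv (Equiv.mulLeft z) _ _ fun g => rfl).symm
        _ = ∑ g : G, (a * b * (starRingEnd ℂ) e) * (χ g * ψ g * (starRingEnd ℂ) (θ g)) := by
              refine Finset.sum_congr rfl fun g _ => ?_
              rw [ha, hb, he, map_mul]
              ring
        _ = (a * b * (starRingEnd ℂ) e) * S := by rw [← Finset.mul_sum]
    exact mul_right_cancel₀ hSne (hre.symm.trans (one_mul S).symm)
  have kc := key η c hc h1
  have kd := key η' d hd h2
  have hab : a * b ≠ 0 := fun h0 => by simp [h0] at kc
  have hcd' : c = d := (starRingEnd ℂ).injective (mul_left_cancel₀ hab (kc.trans kd.symm))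
  have e1 : η z = c * η 1 := by rw [← hc 1, mul_one]
  have e2 : η' z = d * η' 1 := by rw [← hd 1, mul_one]
  rw [e1, e2, hcd']
  ring
end

section
/- Let G be a finite group. Then every one-dimensional unitary character of the center Z(G) (i.e., every group homomorphism from Z(G) to the complex units) arises as the central character of some irreducible finite-dimensional complex representation of G: for every homomorphism ω : Z(G) → ℂˣ there exists an irreducible complex character χ of G with χ(z) = ω(z)·χ(1) for all z ∈ Z(G). (This is the surjectivity part of the isomorphism between the chain group 𝓒(G) and the dual of the center.) -/
open CategoryTheory

open CategoryTheory MonoidAlgebra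

noncomputable section

namespace CCAux

variable {G : Type} [Group G]

/-- The representation attached to a `MonoidAlgebra ℂ G`-module. -/
def repOfModule (N : Type) [AddCommGroup N] [Module ℂ N]
    [Module (MonoidAlgebra ℂ G) N] [IsScalarTower ℂ (MonoidAlgebra ℂ G) N] :
    Representation ℂ G N where
  toFun g :=
    { toFun := fun v => single g (1 : ℂ) • v
      map_add' := fun a b => smul_add _ a b
      map_smul' := fun c v => by
        simp only [RingHom.id_apply]
        rw [← algebraMap_smul (MonoidAlgebra ℂ G) c v, ← mul_smul,
          ← algebraMap_smul (MonoidAlgebra ℂ G) c (single g (1:ℂ) • v), ← mul_smul,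
          Algebra.commutes] }
  map_one' := by
    ext v
    simp [← MonoidAlgebra.one_def]
  map_mul' g h := by
    ext v
    simp only [LinearMap.coe_mk, AddHom.coe_mk, Module.End.mul_apply]
    rw [← mul_smul, single_mul_single, one_mul]

theorem repOfModule_apply {N : Type} [AddCommGroup N] [Module ℂ N]
    [Module (MonoidAlgebra ℂ G) N] [IsScalarTower ℂ (MonoidAlgebra ℂ G) N]
    (g : G) (v : N) : repOfModule N g v = single g (1 : ℂ) • v := rfl

/-- A ℂ-subspace stable under the `G`-action is a submodule over the monoid algebra. -/
def subOfStable {N : Type} [AddCommGroup N] [Module ℂ N]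
    [Module (MonoidAlgebra ℂ G) N] [IsScalarTower ℂ (MonoidAlgebra ℂ G) N]
    (p : Submodule ℂ N) (hp : ∀ (g : G), ∀ v ∈ p, single g (1 : ℂ) • v ∈ p) :
    Submodule (MonoidAlgebra ℂ G) N where
  carrier := p
  add_mem' := p.add_mem
  zero_mem' := p.zero_mem
  smul_mem' := by
    intro a v hv
    induction a using MonoidAlgebra.induction with
    | zero => rw [zero_smul]; exact p.zero_mem
    | single_add g r f _ _ ih =>
      rw [add_smul]
      refine p.add_mem ?_ ih
      have : (single g r : MonoidAlgebra ℂ G) = r • single g (1 : ℂ) := by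
        rw [smul_single', mul_one]
      rw [this, smul_assoc]
      exact p.smul_mem r (hp g v hv)

end CCAux

namespace CCAux

variable {G : Type} [Group G]

theorem simple_repOfModule (N : Type) [AddCommGroup N] [Module ℂ N]
    [Module (MonoidAlgebra ℂ G) N] [IsScalarTower ℂ (MonoidAlgebra ℂ G) N]
    [FiniteDimensional ℂ N] (hN : IsSimpleModule (MonoidAlgebra ℂ G) N) :
    Simple (FDRep.of (repOfModule (G := G) N)) := by
  haveI := hN
  haveI : Nontrivial N := IsSimpleModule.nontrivial (MonoidAlgebra ℂ G) N
  set V : FDRep ℂ G := FDRep.of (repOfModule (G := G) N) with hV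
  constructor
  intro W f hm
  constructor
  · -- IsIso → f ≠ 0
    intro hiso h0
    rw [h0] at hiso
    have h1 : (𝟙 V : V ⟶ V) = 0 := by
      calc 𝟙 V = inv (0 : W ⟶ V) ≫ (0 : W ⟶ V) := (IsIso.inv_hom_id _).symm
        _ = 0 := Limits.comp_zero
    obtain ⟨x, y, hxy⟩ := exists_pair_ne N
    apply hxy
    have hx : ((𝟙 V : V ⟶ V).hom.hom.hom : N →ₗ[ℂ] N) x = ((0 : V ⟶ V).hom.hom.hom : N →ₗ[ℂ] N) x := by
      rw [h1]
    have hy : ((𝟙 V : V ⟶ V).hom.hom.hom : N →ₗ[ℂ] N) y = ((0 : V ⟶ V).hom.hom.hom : N →ₗ[ℂ] N) y := by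
      rw [h1]
    simpa using hx.trans hy.symm
  · -- f ≠ 0 → IsIso
    intro h0
    let fl : (W : Type) →ₗ[ℂ] N := f.hom.hom.hom
    have hcomm : ∀ (g : G) (w : (W : Type)), fl (W.ρ g w) = single g (1 : ℂ) • fl w := by
      intro g w
      have := f.comm g
      have h2 := congrArg (fun (φ : W.V ⟶ V.V) => (φ.hom.hom : (W : Type) →ₗ[ℂ] N) w) this
      exact h2
    -- injectivity
    have hinj : Function.Injective fl := by
      rw [← LinearMap.ker_eq_bot]
      by_contra hker
      have hstab : ∀ (g : G), ∀ w ∈ LinearMap.ker fl, W.ρ g w ∈ LinearMap.ker fl := by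
        intro g w hw
        rw [LinearMap.mem_ker] at hw ⊢
        rw [hcomm, hw, smul_zero]
      let ρK : G → (LinearMap.ker fl) →ₗ[ℂ] (LinearMap.ker fl) :=
        fun g => (W.ρ g).restrict (fun w hw => hstab g w hw)
      have hρK : ∀ (g : G) (x : LinearMap.ker fl), (ρK g x : (W : Type)) = W.ρ g (x : (W : Type)) :=
        fun _ _ => rfl
      let ρKrep : Representation ℂ G (LinearMap.ker fl) :=
        { toFun := ρK
          map_one' := by
            apply LinearMap.ext; intro x; apply Subtype.ext
            rw [hρK]; simp
          map_mul' := fun g h => by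
            apply LinearMap.ext; intro x; apply Subtype.ext
            rw [Module.End.mul_apply, hρK, hρK, hρK]; simp }
      let U : FDRep ℂ G := FDRep.of ρKrep
      let ι : U ⟶ W := ⟨InducedCategory.homMk (ModuleCat.ofHom ((LinearMap.ker fl).subtype : (U : Type) →ₗ[ℂ] (W : Type))), by
        intro g
        apply FGModuleCat.hom_ext
        apply LinearMap.ext
        intro x
        exact hρK g x⟩
      have hι : ι ≫ f = (0 : U ⟶ W) ≫ f := by
        apply Action.hom_ext
        apply FGModuleCat.hom_ext
        apply LinearMap.ext
        intro x
        rw [Action.comp_hom, Action.comp_hom, Action.zero_hom, Limits.zero_comp]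
        let x' : LinearMap.ker fl := x
        exact x'.2
      have hι0 : ι = 0 := (cancel_mono f).mp hι
      obtain ⟨w, hw, hw0⟩ := (Submodule.ne_bot_iff _).mp hker
      apply hw0
      have : (ι.hom.hom.hom : (U : Type) →ₗ[ℂ] (W : Type)) ⟨w, hw⟩ = 0 := by rw [hι0]; rfl
      exact this
    -- surjectivity
    have hsurj : Function.Surjective fl := by
      have hstab : ∀ (g : G), ∀ v ∈ LinearMap.range fl,
          single g (1 : ℂ) • v ∈ LinearMap.range fl := by
        rintro g v ⟨w, rfl⟩
        exact ⟨W.ρ g w, hcomm g w⟩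
      rcases eq_bot_or_eq_top (subOfStable (LinearMap.range fl) hstab) with hbot | htop
      · exfalso
        apply h0
        apply Action.hom_ext
        apply FGModuleCat.hom_ext
        apply LinearMap.ext
        intro w
        have hmem : fl w ∈ subOfStable (LinearMap.range fl) hstab := ⟨w, rfl⟩
        rw [hbot] at hmem
        simpa using hmem
      · intro v
        have hmem : v ∈ subOfStable (LinearMap.range fl) hstab := htop ▸ Submodule.mem_top
        exact hmem
    let e : (W : Type) ≃ₗ[ℂ] N := LinearEquiv.ofBijective fl ⟨hinj, hsurj⟩
    have hfl : ∀ w, e w = fl w := fun _ => rfl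
    let finv : V ⟶ W := ⟨InducedCategory.homMk (ModuleCat.ofHom (e.symm : N →ₗ[ℂ] (W : Type))), by
      intro g
      apply FGModuleCat.hom_ext
      apply LinearMap.ext
      intro v
      apply hinj
      show fl (e.symm (V.ρ g v)) = fl (W.ρ g (e.symm v))
      rw [hcomm]
      have h1 : fl (e.symm (V.ρ g v)) = V.ρ g v := e.apply_symm_apply _
      have h2 : fl (e.symm v) = v := e.apply_symm_apply _
      rw [h1, h2]
      rfl⟩
    refine ⟨⟨finv, ?_, ?_⟩⟩
    · apply Action.hom_ext
      apply FGModuleCat.hom_ext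
      apply LinearMap.ext
      intro w
      exact e.symm_apply_apply w
    · apply Action.hom_ext
      apply FGModuleCat.hom_ext
      apply LinearMap.ext
      intro v
      exact e.apply_symm_apply v

end CCAux


namespace CCAux

variable {G : Type} [Group G] [Fintype G]

open scoped Classical

/-- Weight function on `G`: `ω` on the center, `0` elsewhere. -/
def cw (ω : Subgroup.center G →* ℂˣ) : G → ℂ :=
  fun g => if h : g ∈ Subgroup.center G then (ω ⟨g, h⟩ : ℂ) else 0

theorem cw_one (ω : Subgroup.center G →* ℂˣ) : cw ω 1 = 1 := by
  simp only [cw]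
  rw [dif_pos (Subgroup.center G).one_mem]
  have : (⟨1, (Subgroup.center G).one_mem⟩ : Subgroup.center G) = 1 := rfl
  rw [this, map_one, Units.val_one]

theorem cw_mul (ω : Subgroup.center G →* ℂˣ) (g : G) (z : Subgroup.center G) :
    cw ω (g * z) = cw ω g * (ω z : ℂ) := by
  by_cases h : g ∈ Subgroup.center G
  · have h2 : g * (z : G) ∈ Subgroup.center G := (Subgroup.center G).mul_mem h z.2
    simp only [cw]
    rw [dif_pos h, dif_pos h2]
    have : (⟨g * z, h2⟩ : Subgroup.center G) = ⟨g, h⟩ * z := rfl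
    rw [this, map_mul, Units.val_mul]
  · have h2 : g * (z : G) ∉ Subgroup.center G := by
      intro hc
      apply h
      have := (Subgroup.center G).mul_mem hc ((Subgroup.center G).inv_mem z.2)
      simpa using this
    simp only [cw]
    rw [dif_neg h, dif_neg h2, zero_mul]

/-- The `ℂ`-linear functional `x ↦ ∑ g, x g * cw ω g` on the monoid algebra. -/
def phi (ω : Subgroup.center G →* ℂˣ) : MonoidAlgebra ℂ G →ₗ[ℂ] ℂ where
  toFun x := ∑ g : G, x.coeff g * cw ω g
  map_add' x y := by
    have h : ∀ g : G, (x + y).coeff g = x.coeff g + y.coeff g := fun g => Finsupp.add_apply x.coeff y.coeff g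
    simp [h, add_mul, Finset.sum_add_distrib]
  map_smul' c x := by
    have h : ∀ g : G, (c • x).coeff g = c * x.coeff g := fun g => Finsupp.smul_apply (b := c) (v := x.coeff) (a := g)
    simp [h, Finset.mul_sum, mul_assoc]

theorem phi_one (ω : Subgroup.center G →* ℂˣ) : phi ω 1 = 1 := by
  rw [phi]
  simp only [LinearMap.coe_mk, AddHom.coe_mk, MonoidAlgebra.one_def]
  rw [Finset.sum_eq_single (1 : G)]
  · rw [MonoidAlgebra.single_apply, if_pos rfl, one_mul, cw_one]
  · intro b _ hb
    rw [MonoidAlgebra.single_apply, if_neg (Ne.symm hb), zero_mul]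
  · intro h
    exact absurd (Finset.mem_univ 1) h

theorem phi_mul_single (ω : Subgroup.center G →* ℂˣ) (a : MonoidAlgebra ℂ G)
    (z : Subgroup.center G) :
    phi ω (a * MonoidAlgebra.single (z : G) (1 : ℂ)) = phi ω a * (ω z : ℂ) := by
  rw [phi]
  simp only [LinearMap.coe_mk, AddHom.coe_mk]
  have key : ∀ y : G, (a * MonoidAlgebra.single (z : G) (1 : ℂ)).coeff y = a.coeff (y * (z : G)⁻¹) := by
    intro y
    rw [MonoidAlgebra.mul_single_apply, mul_one]
  simp only [key]
  rw [Finset.sum_mul]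
  refine Fintype.sum_equiv (Equiv.mulRight (z : G)⁻¹) _ _ ?_
  intro x
  simp only [Equiv.coe_mulRight]
  rw [mul_assoc, ← cw_mul, inv_mul_cancel_right]

/-- The generator `single z 1 - ω z` of the annihilating ideal. -/
def gen (ω : Subgroup.center G →* ℂˣ) (z : Subgroup.center G) : MonoidAlgebra ℂ G :=
  MonoidAlgebra.single (z : G) (1 : ℂ) - algebraMap ℂ (MonoidAlgebra ℂ G) (ω z : ℂ)

theorem phi_mul_gen (ω : Subgroup.center G →* ℂˣ) (a : MonoidAlgebra ℂ G)
    (z : Subgroup.center G) : phi ω (a * gen ω z) = 0 := by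
  rw [gen, mul_sub, map_sub, phi_mul_single, ← Algebra.commutes, ← Algebra.smul_def,
    map_smul]
  simp [mul_comm]

theorem gen_central (ω : Subgroup.center G →* ℂˣ) (z : Subgroup.center G)
    (x : MonoidAlgebra ℂ G) : gen ω z * x = x * gen ω z := by
  rw [gen, sub_mul, mul_sub, ← Algebra.commutes]
  congr 1
  refine MonoidAlgebra.single_commute (fun a' => ?_) (fun b' => Commute.one_left b') x
  exact ((Subgroup.mem_center_iff.mp z.2) a').symm

end CCAux

namespace CCAux

variable {G : Type} [Group G] [Fintype G]

open scoped Classical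

/-- The left ideal generated by the elements `single z 1 - ω z`. -/
def idl (ω : Subgroup.center G →* ℂˣ) : Submodule (MonoidAlgebra ℂ G) (MonoidAlgebra ℂ G) :=
  Submodule.span (MonoidAlgebra ℂ G) (Set.range (gen ω))

theorem phi_eq_zero_of_mem (ω : Subgroup.center G →* ℂˣ) {x : MonoidAlgebra ℂ G}
    (hx : x ∈ idl ω) : phi ω x = 0 := by
  let J : Submodule (MonoidAlgebra ℂ G) (MonoidAlgebra ℂ G) :=
    { carrier := {x | ∀ a, phi ω (a * x) = 0}
      add_mem' := fun hx hy a => by rw [mul_add, map_add, hx a, hy a, add_zero]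
      zero_mem' := fun a => by rw [mul_zero, map_zero]
      smul_mem' := fun b x hx a => by rw [smul_eq_mul, ← mul_assoc]; exact hx (a * b) }
  have hJ : idl ω ≤ J := Submodule.span_le.mpr (by rintro _ ⟨z, rfl⟩ a; exact phi_mul_gen ω a z)
  have h1 := hJ hx 1
  rwa [one_mul] at h1

theorem one_not_mem (ω : Subgroup.center G →* ℂˣ) : (1 : MonoidAlgebra ℂ G) ∉ idl ω := by
  intro h
  have := phi_eq_zero_of_mem ω h
  rw [phi_one] at this
  exact one_ne_zero this

theorem quot_z_smul (ω : Subgroup.center G →* ℂˣ) (z : Subgroup.center G)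
    (m : MonoidAlgebra ℂ G ⧸ idl ω) :
    (MonoidAlgebra.single (z : G) (1 : ℂ)) • m = (ω z : ℂ) • m := by
  obtain ⟨x, rfl⟩ := Submodule.Quotient.mk_surjective _ m
  rw [← Submodule.Quotient.mk_smul, ← Submodule.Quotient.mk_smul, Submodule.Quotient.eq]
  have h1 : MonoidAlgebra.single (z : G) (1 : ℂ) • x - (ω z : ℂ) • x = x * gen ω z := by
    rw [smul_eq_mul, Algebra.smul_def, ← sub_mul, ← gen, gen_central ω z x]
  rw [h1, ← smul_eq_mul]
  exact Submodule.smul_mem _ x (Submodule.subset_span ⟨z, rfl⟩)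

end CCAux

open CategoryTheory

/-- Every one-dimensional unitary character of the center `Z(G)` of a finite group `G`
arises as the central character of some irreducible complex character of `G`.  This is
the surjectivity part of the isomorphism between the chain group `𝓒(G)` and the dual
of the center. -/
theorem central_character_surjective (G : Type) [Group G] [Fintype G]
    (ω : Subgroup.center G →* ℂˣ) :
    ∃ χ : G → ℂ, IsIrrChar G χ ∧
      ∀ z : Subgroup.center G, χ (z : G) = (ω z : ℂ) * χ 1 := by
  classical
  let M := MonoidAlgebra ℂ G ⧸ CCAux.idl ω
  haveI : Module.Finite ℂ (MonoidAlgebra ℂ G) :=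
    Module.Finite.of_basis (MonoidAlgebra.basis G ℂ)
  haveI : Module.Finite ℂ M :=
    Module.Finite.of_surjective ((CCAux.idl ω).mkQ.restrictScalars ℂ)
      (Submodule.Quotient.mk_surjective _)
  haveI : Nontrivial M := by
    refine (Submodule.Quotient.nontrivial_iff (p := CCAux.idl ω)).mpr ?_
    intro h
    exact CCAux.one_not_mem ω (h ▸ Submodule.mem_top)
  haveI : IsArtinian (MonoidAlgebra ℂ G) M := isArtinian_of_tower ℂ inferInstance
  haveI : Nontrivial (Submodule (MonoidAlgebra ℂ G) M) := ⟨⊥, ⊤, bot_ne_top⟩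
  haveI : IsAtomic (Submodule (MonoidAlgebra ℂ G) M) :=
    isAtomic_of_orderBot_wellFounded_lt IsWellFounded.wf
  obtain ⟨S, hS⟩ := IsAtomic.exists_atom (α := Submodule (MonoidAlgebra ℂ G) M)
  haveI hSimp : IsSimpleModule (MonoidAlgebra ℂ G) S := isSimpleModule_iff_isAtom.mpr hS
  haveI : FiniteDimensional ℂ S :=
    FiniteDimensional.of_injective ((S.subtype).restrictScalars ℂ) Subtype.val_injective
  let V : FDRep ℂ G := FDRep.of (CCAux.repOfModule (G := G) S)
  have hsimple : Simple V := CCAux.simple_repOfModule (G := G) S hSimp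
  refine ⟨V.character, ⟨V, hsimple, rfl⟩, ?_⟩
  intro z
  have h1 : ∀ v : S, CCAux.repOfModule (G := G) S (z : G) v = (ω z : ℂ) • v := by
    intro v
    apply Subtype.ext
    rw [CCAux.repOfModule_apply]
    rw [Submodule.coe_smul, Submodule.coe_smul_of_tower]
    exact CCAux.quot_z_smul ω z (v : M)
  have hρ : V.ρ (z : G) = (ω z : ℂ) • (V.ρ (1 : G)) := by
    rw [map_one]
    apply LinearMap.ext
    intro v
    have := h1 v
    exact this
  show V.character (z : G) = (ω z : ℂ) * V.character (1 : G)
  rw [FDRep.character, FDRep.character, hρ, map_smul, smul_eq_mul]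
end
end

section
/- Let G be a finite group and η an irreducible complex character of G. Then η is trivial on the center, i.e., η(z) = η(1) for all z ∈ Z(G), if and only if there exist irreducible complex characters χ_1, …, χ_n of G such that η occurs as a constituent of the pointwise product χ_1·conj(χ_1)·χ_2·conj(χ_2) ⋯ χ_n·conj(χ_n). (This canonically characterizes the representation subring R_{Z(G)} as the smallest representation subring containing all irreducible constituents of products χ·χ* with χ irreducible.) -/
open CategoryTheory Finset

variable {G : Type} [Group G]

namespace CharProof

/-- A nonzero vector in a simple `FDRep`. -/
lemma exists_ne_zero (V : FDRep ℂ G) [Simple V] : ∃ v : V, v ≠ 0 := by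
  by_contra h
  push_neg at h
  have hsub : Subsingleton V := ⟨fun a b => by rw [h a, h b]⟩
  have : (𝟙 V : V ⟶ V) = 0 := by
    apply Action.Hom.ext
    apply FGModuleCat.hom_ext; apply LinearMap.ext
    intro x
    exact hsub.elim _ _
  exact (Simple.mono_isIso_iff_nonzero (𝟙 V)).mp (by infer_instance) this

lemma finrank_pos (V : FDRep ℂ G) [Simple V] : 0 < Module.finrank ℂ V := by
  obtain ⟨v, hv⟩ := exists_ne_zero V
  have : Nontrivial V := ⟨⟨v, 0, hv⟩⟩
  exact Module.finrank_pos

/-- Schur: endomorphism of simple rep is scalar. -/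
lemma rho_central_scalar [Fintype G] (V : FDRep ℂ G) [Simple V] {z : G}
    (hz : z ∈ Subgroup.center G) : ∃ ω : ℂ, V.ρ z = ω • (1 : Module.End ℂ V) := by
  let f : V ⟶ V := ⟨ObjectProperty.homMk (ModuleCat.ofHom (V.ρ z)), by
    intro g
    apply FGModuleCat.hom_ext; apply LinearMap.ext
    intro x
    change (V.ρ z) ((V.ρ g) x) = (V.ρ g) ((V.ρ z) x)
    rw [← Module.End.mul_apply, ← Module.End.mul_apply, ← map_mul, ← map_mul,
      (Subgroup.mem_center_iff.mp hz g)]⟩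
  obtain ⟨c, hc⟩ := endomorphism_simple_eq_smul_id ℂ f
  refine ⟨c, ?_⟩
  have := congrArg Action.Hom.hom hc
  ext x; exact (congrArg (fun t => t.hom.hom x) this).symm

end CharProof

namespace CharProof

variable [Fintype G]

lemma central_char (V : FDRep ℂ G) [Simple V] {z : G} (hz : z ∈ Subgroup.center G) :
    ∃ ω : ℂ, (∀ g, V.character (z * g) = ω * V.character g) ∧
      ω * (starRingEnd ℂ) ω = 1 ∧ V.character z = ω * V.character 1 := by
  obtain ⟨ω, hω⟩ := rho_central_scalar V hz
  have hmul : ∀ g, V.character (z * g) = ω * V.character g := by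
    intro g
    unfold FDRep.character
    rw [map_mul, hω]
    have : (ω • (1 : Module.End ℂ V)) * V.ρ g = ω • V.ρ g := by
      ext x; simp
    rw [this, map_smul, smul_eq_mul]
  have hk : ω ^ Fintype.card G = 1 := by
    have hzk : (V.ρ z) ^ Fintype.card G = 1 := by
      rw [← map_pow, pow_card_eq_one, map_one]
    rw [hω, smul_pow, one_pow] at hzk
    obtain ⟨v, hv⟩ := exists_ne_zero V
    have := congrArg (fun (f : Module.End ℂ V) => f v) hzk
    simp only [LinearMap.smul_apply, Module.End.one_apply] at this
    have h2 : (ω ^ Fintype.card G - 1) • v = 0 := by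
      rw [sub_smul, one_smul, this]
      exact sub_self v
    rcases smul_eq_zero.mp h2 with h | h
    · linear_combination h
    · exact absurd h hv
  have hns : Complex.normSq ω = 1 := by
    have h1 : (Complex.normSq ω) ^ Fintype.card G = 1 := by
      rw [← map_pow, hk, map_one]
    rcases (pow_eq_one_iff_cases.mp h1) with h | h | h
    · exact absurd h Fintype.card_ne_zero
    · exact h
    · nlinarith [Complex.normSq_nonneg ω, h.1]
  refine ⟨ω, hmul, by rw [Complex.mul_conj, hns, Complex.ofReal_one], ?_⟩
  simpa using hmul 1

end CharProof

namespace CharProof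

variable [Fintype G]

lemma backward_dir {η : G → ℂ} (hη : IsIrrChar G η) (n : ℕ) (χ : Fin (n + 1) → G → ℂ)
    (hχ : ∀ i, IsIrrChar G (χ i))
    (hm : charMult G (fun g => ∏ i, χ i g * (starRingEnd ℂ) (χ i g)) η ≠ 0) :
    ∀ z ∈ Subgroup.center G, η z = η 1 := by
  intro z hz
  obtain ⟨V, hV, rfl⟩ := hη
  haveI := hV
  obtain ⟨ω, hωmul, hωconj, hωz⟩ := central_char V hz
  set φ : G → ℂ := fun g => ∏ i, χ i g * (starRingEnd ℂ) (χ i g) with hφ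
  have hφz : ∀ g, φ (z * g) = φ g := by
    intro g
    apply Finset.prod_congr rfl
    intro i _
    obtain ⟨W, hW, hWc⟩ := hχ i
    haveI := hW
    obtain ⟨ωi, hωi, hωiconj, _⟩ := central_char W hz
    rw [hWc, hωi g, map_mul]
    calc ωi * W.character g * ((starRingEnd ℂ) ωi * (starRingEnd ℂ) (W.character g))
        = (ωi * (starRingEnd ℂ) ωi) * (W.character g * (starRingEnd ℂ) (W.character g)) := by ring
      _ = W.character g * (starRingEnd ℂ) (W.character g) := by rw [hωiconj, one_mul]
  set S : ℂ := ∑ g : G, φ g * (starRingEnd ℂ) (V.character g) with hS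
  have hSne : S ≠ 0 := by
    intro h
    apply hm
    unfold charMult
    rw [← hS, h, mul_zero]
  have hkey : S = (starRingEnd ℂ) ω * S := by
    calc S = ∑ g : G, φ (z * g) * (starRingEnd ℂ) (V.character (z * g)) := by
            rw [hS]
            exact (Fintype.sum_bijective (fun g => z * g)
              (Group.mulLeft_bijective z) _ _ (fun x => rfl)).symm
      _ = ∑ g : G, (starRingEnd ℂ) ω * (φ g * (starRingEnd ℂ) (V.character g)) := by
            apply Finset.sum_congr rfl
            intro g _
            rw [hφz g, hωmul g, map_mul]
            ring
      _ = (starRingEnd ℂ) ω * S := by rw [← Finset.mul_sum, hS]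
  have hω1 : ω = 1 := by
    have h1 : (starRingEnd ℂ) ω = 1 := by
      have h2 : ((starRingEnd ℂ) ω - 1) * S = 0 := by
        rw [sub_mul, one_mul, ← hkey, sub_self]
      rcases mul_eq_zero.mp h2 with h | h
      · linear_combination h
      · exact absurd h hSne
    calc ω = (starRingEnd ℂ) ((starRingEnd ℂ) ω) := (Complex.conj_conj ω).symm
      _ = 1 := by rw [h1, map_one]
  rw [hωz, hω1, one_mul]

end CharProof

namespace CharProof

/-- The subrepresentation on an invariant subspace. -/
noncomputable def subρ (V : FDRep ℂ G) (p : Submodule ℂ V) (hp : ∀ (g : G), ∀ x ∈ p, V.ρ g x ∈ p) :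
    Representation ℂ G p where
  toFun g := (V.ρ g).restrict (fun x hx => hp g x hx)
  map_one' := by ext x; simp [LinearMap.restrict_apply]
  map_mul' g h := by ext x; simp [LinearMap.restrict_apply]

@[simp]
lemma subρ_apply (V : FDRep ℂ G) (p : Submodule ℂ V) (hp : ∀ (g : G), ∀ x ∈ p, V.ρ g x ∈ p)
    (g : G) (x : p) : ((subρ V p hp g x : p) : V) = V.ρ g (x : V) := rfl

lemma simple_of_subspaces (V : FDRep ℂ G) (hnt : ∃ v : V, v ≠ 0)
    (hs : ∀ p : Submodule ℂ V, (∀ (g : G), ∀ x ∈ p, V.ρ g x ∈ p) → p = ⊥ ∨ p = ⊤) :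
    Simple V := by
  refine ⟨fun {Y} f hm => ⟨?_, ?_⟩⟩
  · intro hiso h0
    obtain ⟨v, hv⟩ := hnt
    have h1 : (𝟙 V : V ⟶ V) = 0 := by
      have h2 := IsIso.inv_hom_id f
      have h3 := congrArg (fun (t : Y ⟶ V) => inv f ≫ t) h0
      simp only [Limits.comp_zero] at h3
      rw [h2] at h3
      exact h3
    have := congrArg Action.Hom.hom h1
    simp only [Action.id_hom] at this
    apply hv
    calc v = (𝟙 V.V : V.V ⟶ V.V).hom.hom v := rfl
      _ = 0 := by rw [this]; rfl
  · intro hf0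
    have hcomm : ∀ (g : G) (y : Y), f.hom.hom.hom (Y.ρ g y) = V.ρ g (f.hom.hom.hom y) := by
      intro g y
      exact congrArg (fun (h : Y.V ⟶ V.V) => h.hom.hom y) (f.comm g)
    -- the range is an invariant subspace
    have hrange : ∀ (g : G), ∀ x ∈ LinearMap.range f.hom.hom.hom,
        V.ρ g x ∈ LinearMap.range f.hom.hom.hom := by
      rintro g x ⟨y, rfl⟩
      exact ⟨Y.ρ g y, hcomm g y⟩
    have hrtop : LinearMap.range f.hom.hom.hom = ⊤ := by
      rcases hs _ hrange with h | h
      · exfalso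
        apply hf0
        apply Action.Hom.ext
        apply FGModuleCat.hom_ext; apply LinearMap.ext
        intro y
        have : f.hom.hom.hom y ∈ (⊥ : Submodule ℂ V) := h ▸ ⟨y, rfl⟩
        simpa using this
      · exact h
    -- the kernel is trivial
    have hker : LinearMap.ker f.hom.hom.hom = ⊥ := by
      set K := LinearMap.ker f.hom.hom.hom with hK
      have hKinv : ∀ (g : G), ∀ x ∈ K, Y.ρ g x ∈ K := by
        intro g x hx
        have : f.hom.hom.hom (Y.ρ g x) = 0 := by
          rw [hcomm g x, LinearMap.mem_ker.mp hx, map_zero]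
        exact LinearMap.mem_ker.mpr this
      let ι : FDRep.of (subρ Y K hKinv) ⟶ Y := ⟨ObjectProperty.homMk (ModuleCat.ofHom K.subtype), fun g => rfl⟩
      have hι : ι ≫ f = 0 := by
        apply Action.Hom.ext
        apply FGModuleCat.hom_ext; apply LinearMap.ext
        rintro ⟨x, hx⟩
        exact LinearMap.mem_ker.mp hx
      have hι0 : ι = 0 := by
        rw [← cancel_mono f, hι, Limits.zero_comp]
      rw [Submodule.eq_bot_iff]
      intro x hx
      have := congrArg (fun (h : FDRep.of (subρ Y K hKinv) ⟶ Y) =>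
        h.hom.hom.hom ⟨x, hx⟩) hι0
      exact this
    have hbij : Function.Bijective f.hom.hom.hom :=
      ⟨LinearMap.ker_eq_bot.mp hker, LinearMap.range_eq_top.mp hrtop⟩
    let e : Y ≃ₗ[ℂ] V := LinearEquiv.ofBijective _ hbij
    have hcomm' : ∀ (g : G) (x : V), (e.symm : V →ₗ[ℂ] Y) (V.ρ g x) = Y.ρ g (e.symm x) := by
      intro g x
      apply hbij.1
      change f.hom.hom.hom (e.symm (V.ρ g x)) = f.hom.hom.hom (Y.ρ g (e.symm x))
      rw [hcomm g]
      have h1 : ∀ w : V, f.hom.hom.hom (e.symm w) = w := fun w => e.apply_symm_apply w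
      rw [h1, h1]
    let finv : V ⟶ Y := ⟨ObjectProperty.homMk (ModuleCat.ofHom (e.symm : V →ₗ[ℂ] Y)), fun g => by
      apply FGModuleCat.hom_ext; apply LinearMap.ext
      intro x
      exact hcomm' g x⟩
    refine ⟨⟨finv, ?_, ?_⟩⟩
    · apply Action.Hom.ext
      apply FGModuleCat.hom_ext; apply LinearMap.ext
      intro y
      exact e.symm_apply_apply y
    · apply Action.Hom.ext
      apply FGModuleCat.hom_ext; apply LinearMap.ext
      intro x
      exact e.apply_symm_apply x

end CharProof

namespace CharProof

lemma abs_sum_eq_case (t : Finset ℂ) (d : ℂ → ℝ) (hd : ∀ μ ∈ t, 0 < d μ)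
    (hμ : ∀ μ ∈ t, ‖μ‖ = 1)
    (heq : ‖∑ μ ∈ t, (d μ : ℂ) * μ‖ = ∑ μ ∈ t, d μ) :
    ∀ μ ∈ t, (↑(∑ ν ∈ t, d ν) : ℂ) * μ = ∑ ν ∈ t, (d ν : ℂ) * ν := by
  set T : ℂ := ∑ ν ∈ t, (d ν : ℂ) * ν with hT
  set D : ℝ := ∑ ν ∈ t, d ν with hD
  have habs : ‖T‖ = D := heq
  have hre_le : ∀ μ ∈ t, ((starRingEnd ℂ) T * μ).re ≤ D := by
    intro μ hμt
    calc ((starRingEnd ℂ) T * μ).re ≤ ‖(starRingEnd ℂ) T * μ‖ := Complex.re_le_norm _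
      _ = ‖T‖ * ‖μ‖ := by rw [norm_mul, Complex.norm_conj]
      _ = D := by rw [habs, hμ μ hμt, mul_one]
  have hre_sum : ∑ μ ∈ t, d μ * ((starRingEnd ℂ) T * μ).re = D ^ 2 := by
    have h1 : (starRingEnd ℂ) T * T = ∑ μ ∈ t, (d μ : ℂ) * ((starRingEnd ℂ) T * μ) := by
      rw [hT, Finset.mul_sum]
      apply Finset.sum_congr rfl
      intro μ _
      ring
    have h2 : ((starRingEnd ℂ) T * T).re = ∑ μ ∈ t, d μ * ((starRingEnd ℂ) T * μ).re := by
      rw [h1, Complex.re_sum]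
      apply Finset.sum_congr rfl
      intro μ _
      rw [Complex.re_ofReal_mul]
    rw [← h2]
    have h3 : ((starRingEnd ℂ) T * T).re = Complex.normSq T := by
      rw [← Complex.normSq_eq_conj_mul_self]
      simp
    rw [h3, ← Complex.sq_norm, habs]
  have hre_eq : ∀ μ ∈ t, ((starRingEnd ℂ) T * μ).re = D := by
    have hzero : ∑ μ ∈ t, d μ * (D - ((starRingEnd ℂ) T * μ).re) = 0 := by
      have : ∑ μ ∈ t, d μ * (D - ((starRingEnd ℂ) T * μ).re)
          = (∑ μ ∈ t, d μ * D) - ∑ μ ∈ t, d μ * ((starRingEnd ℂ) T * μ).re := by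
        rw [← Finset.sum_sub_distrib]
        apply Finset.sum_congr rfl
        intro μ _; ring
      rw [this, hre_sum, ← Finset.sum_mul, ← hD]
      ring
    intro μ hμt
    have := (Finset.sum_eq_zero_iff_of_nonneg (fun ν hν => by
      have := hre_le ν hν
      have := (hd ν hν).le
      nlinarith)).mp hzero μ hμt
    rcases mul_eq_zero.mp this with h | h
    · exact absurd h (ne_of_gt (hd μ hμt))
    · linarith
  intro μ hμt
  have hnormSq : Complex.normSq ((D : ℂ) * μ - T) = 0 := by
    have hexp : Complex.normSq ((D : ℂ) * μ - T)
        = Complex.normSq ((D : ℂ) * μ) + Complex.normSq T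
          - 2 * (((D : ℂ) * μ) * (starRingEnd ℂ) T).re := by
      rw [Complex.normSq_sub]
    have h1 : Complex.normSq ((D : ℂ) * μ) = D ^ 2 := by
      rw [Complex.normSq_mul, Complex.normSq_ofReal, ← Complex.sq_norm μ, hμ μ hμt]
      ring
    have h2 : Complex.normSq T = D ^ 2 := by rw [← Complex.sq_norm, habs]
    have h3 : (((D : ℂ) * μ) * (starRingEnd ℂ) T).re = D ^ 2 := by
      have : ((D : ℂ) * μ) * (starRingEnd ℂ) T = (D : ℂ) * ((starRingEnd ℂ) T * μ) := by ring
      rw [this, Complex.re_ofReal_mul, hre_eq μ hμt]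
      ring
    rw [hexp, h1, h2, h3]
    ring
  have := Complex.normSq_eq_zero.mp hnormSq
  linear_combination this

end CharProof

namespace CharProof

open Module Polynomial

lemma trace_bound {W : Type} [AddCommGroup W] [Module ℂ W] [FiniteDimensional ℂ W]
    (A : Module.End ℂ W) {k : ℕ} (hk : k ≠ 0) (hA : A ^ k = 1) :
    ‖LinearMap.trace ℂ W A‖ ≤ (finrank ℂ W : ℝ) ∧
      (‖LinearMap.trace ℂ W A‖ = (finrank ℂ W : ℝ) →
        ∃ u : ℂ, A = u • (1 : Module.End ℂ W)) := by
  -- A is semisimple since it satisfies the squarefree polynomial X^k - 1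
  have hsq : Squarefree (X ^ k - C (1 : ℂ)) :=
    (Polynomial.separable_X_pow_sub_C (1 : ℂ)
      (by exact_mod_cast Nat.cast_ne_zero.mpr hk) one_ne_zero).squarefree
  have haev : aeval A (X ^ k - C (1 : ℂ)) = 0 := by
    simp [map_sub, map_pow, aeval_X, aeval_C, hA]
  have hss : A.IsSemisimple := Module.End.isSemisimple_of_squarefree_aeval_eq_zero hsq haev
  have hsup : ⨆ μ : ℂ, A.eigenspace μ = ⊤ := by
    have h1 := Module.End.iSup_maxGenEigenspace_eq_top A
    have h2 : ∀ μ : ℂ, A.maxGenEigenspace μ = A.eigenspace μ := fun μ =>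
      hss.isFinitelySemisimple.maxGenEigenspace_eq_eigenspace μ
    simp_rw [h2] at h1
    exact h1
  have hind := A.eigenspaces_iSupIndep
  have hint : DirectSum.IsInternal (fun μ : ℂ => A.eigenspace μ) :=
    DirectSum.isInternal_submodule_of_iSupIndep_of_iSup_eq_top hind hsup
  -- eigenvalues are k-th roots of unity
  have hroot : ∀ μ : ℂ, A.eigenspace μ ≠ ⊥ → μ ^ k = 1 := by
    intro μ hμ
    obtain ⟨v, hv⟩ := Module.End.HasEigenvalue.exists_hasEigenvector hμ
    have h1 : (A ^ k) v = μ ^ k • v := hv.pow_apply k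
    rw [hA] at h1
    have h2 : (μ ^ k - 1) • v = 0 := by
      rw [sub_smul, one_smul, ← h1]
      exact sub_self _
    rcases smul_eq_zero.mp h2 with h | h
    · linear_combination h
    · exact absurd h hv.2
  have hfin : {μ : ℂ | A.eigenspace μ ≠ ⊥}.Finite := by
    apply Set.Finite.subset (Polynomial.finite_setOf_isRoot
      (p := X ^ k - C (1 : ℂ)) ?_)
    · intro μ hμ
      simp only [Set.mem_setOf_eq, IsRoot.def, eval_sub, eval_pow, eval_X, eval_C]
      rw [hroot μ hμ]
      ring
    · intro h
      have := congrArg (fun p => Polynomial.eval (0 : ℂ) p) h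
      simp [zero_pow hk] at this
  have hmap : ∀ μ : ℂ, Set.MapsTo A (A.eigenspace μ) (A.eigenspace μ) := by
    intro μ x hx
    simp only [SetLike.mem_coe] at hx ⊢
    have h1 : A x = μ • x := Module.End.mem_eigenspace_iff.mp hx
    rw [Module.End.mem_eigenspace_iff, h1, map_smul, h1]
  set t := hfin.toFinset with ht
  have hdpos : ∀ μ ∈ t, 0 < finrank ℂ (A.eigenspace μ) := by
    intro μ hμ
    rw [ht, Set.Finite.mem_toFinset] at hμ
    have : Nontrivial (A.eigenspace μ) := Submodule.nontrivial_iff_ne_bot.mpr hμ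
    exact Module.finrank_pos
  -- the restriction of A to an eigenspace is scalar
  have hres : ∀ μ : ℂ, A.restrict (hmap μ) = μ • (1 : Module.End ℂ (A.eigenspace μ)) := by
    intro μ
    apply LinearMap.ext
    rintro ⟨x, hx⟩
    apply Subtype.ext
    change A x = μ • x
    exact Module.End.mem_eigenspace_iff.mp hx
  have htr : LinearMap.trace ℂ W A = ∑ μ ∈ t, μ * (finrank ℂ (A.eigenspace μ) : ℂ) := by
    rw [LinearMap.trace_eq_sum_trace_restrict' hint hfin hmap]
    apply Finset.sum_congr rfl
    intro μ _
    rw [hres μ, map_smul, LinearMap.trace_one, smul_eq_mul]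
  have hdim : (finrank ℂ W : ℕ) = ∑ μ ∈ t, finrank ℂ (A.eigenspace μ) := by
    have hmapid : ∀ μ : ℂ, Set.MapsTo (LinearMap.id (R := ℂ) (M := W))
        (A.eigenspace μ) (A.eigenspace μ) := fun μ x hx => hx
    have h1 := LinearMap.trace_eq_sum_trace_restrict' hint hfin hmapid
    have h2 : ∀ μ : ℂ, (LinearMap.id (R := ℂ) (M := W)).restrict (hmapid μ)
        = (1 : Module.End ℂ (A.eigenspace μ)) := by
      intro μ; apply LinearMap.ext; rintro ⟨x, hx⟩; rfl
    simp_rw [h2, LinearMap.trace_one] at h1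
    have h3 : LinearMap.trace ℂ W LinearMap.id = (finrank ℂ W : ℂ) := LinearMap.trace_id ℂ W
    rw [h3] at h1
    exact_mod_cast h1
  have habsμ : ∀ μ ∈ t, ‖μ‖ = 1 := by
    intro μ hμ
    rw [ht, Set.Finite.mem_toFinset] at hμ
    have h1 : ‖μ‖ ^ k = 1 := by
      rw [← norm_pow, hroot μ hμ, norm_one]
    rcases pow_eq_one_iff_cases.mp h1 with h | h | h
    · exact absurd h hk
    · exact h
    · nlinarith [norm_nonneg μ, h.1]
  -- the bound
  have hbound : ‖LinearMap.trace ℂ W A‖ ≤ (finrank ℂ W : ℝ) := by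
    rw [htr]
    calc ‖∑ μ ∈ t, μ * (finrank ℂ (A.eigenspace μ) : ℂ)‖
        ≤ ∑ μ ∈ t, ‖μ * (finrank ℂ (A.eigenspace μ) : ℂ)‖ :=
          norm_sum_le _ _
      _ = ∑ μ ∈ t, (finrank ℂ (A.eigenspace μ) : ℝ) := by
          apply Finset.sum_congr rfl
          intro μ hμ
          rw [norm_mul, habsμ μ hμ, one_mul]
          simp
      _ = (finrank ℂ W : ℝ) := by rw [hdim]; push_cast; rfl
  refine ⟨hbound, ?_⟩
  intro heq
  by_cases hn : finrank ℂ W = 0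
  · refine ⟨1, ?_⟩
    have hW : Subsingleton W := (Module.finrank_zero_iff (R := ℂ) (M := W)).mp hn
    apply LinearMap.ext
    intro x
    exact hW.elim _ _
  · have hdpos' : ∀ μ ∈ t, (0 : ℝ) < (finrank ℂ (A.eigenspace μ) : ℝ) := by
      intro μ hμ
      exact_mod_cast hdpos μ hμ
    have htne : t.Nonempty := by
      by_contra h
      rw [Finset.not_nonempty_iff_eq_empty] at h
      rw [h, Finset.sum_empty] at hdim
      exact hn hdim
    have heq2 : ‖∑ μ ∈ t, ((finrank ℂ (A.eigenspace μ) : ℝ) : ℂ) * μ‖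
        = ∑ μ ∈ t, (finrank ℂ (A.eigenspace μ) : ℝ) := by
      have hcomm : ∑ μ ∈ t, ((finrank ℂ (A.eigenspace μ) : ℝ) : ℂ) * μ
          = ∑ μ ∈ t, μ * (finrank ℂ (A.eigenspace μ) : ℂ) := by
        apply Finset.sum_congr rfl
        intro μ _
        push_cast
        ring
      rw [hcomm, ← htr, heq, hdim]
      push_cast
      rfl
    have hkey := abs_sum_eq_case t (fun μ => (finrank ℂ (A.eigenspace μ) : ℝ))
      hdpos' habsμ heq2
    obtain ⟨u, hu⟩ := htne
    refine ⟨u, ?_⟩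
    have hD : (∑ ν ∈ t, (finrank ℂ (A.eigenspace ν) : ℝ)) ≠ 0 := by
      have : (0:ℝ) < ∑ ν ∈ t, (finrank ℂ (A.eigenspace ν) : ℝ) :=
        Finset.sum_pos hdpos' ⟨u, hu⟩
      linarith
    have hueq : ∀ μ ∈ t, μ = u := by
      intro μ hμ
      have h3 : (↑(∑ ν ∈ t, (finrank ℂ (A.eigenspace ν) : ℝ)) : ℂ) * μ
          = (↑(∑ ν ∈ t, (finrank ℂ (A.eigenspace ν) : ℝ)) : ℂ) * u :=
        (hkey μ hμ).trans (hkey u hu).symm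
      have h4 : (↑(∑ ν ∈ t, (finrank ℂ (A.eigenspace ν) : ℝ)) : ℂ) ≠ 0 := by
        exact_mod_cast hD
      exact mul_left_cancel₀ h4 h3
    apply LinearMap.ext
    intro x
    have hxtop : x ∈ (⊤ : Submodule ℂ W) := trivial
    rw [← hsup] at hxtop
    refine Submodule.iSup_induction (motive := fun y => A y = u • y) _ hxtop ?_ ?_ ?_
    · intro μ y hy
      show A y = u • y
      by_cases hμ : A.eigenspace μ = ⊥
      · rw [hμ] at hy
        simp only [Submodule.mem_bot] at hy
        rw [hy, map_zero, smul_zero]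
      · have hμt : μ ∈ t := by rw [ht, Set.Finite.mem_toFinset]; exact hμ
        rw [Module.End.mem_eigenspace_iff.mp hy, hueq μ hμt]
    · show A 0 = u • (0 : W)
      rw [map_zero, smul_zero]
    · intro y z hy hz
      show A (y + z) = u • (y + z)
      rw [map_add, hy, hz, smul_add]

end CharProof

namespace CharProof

variable [Fintype G]

lemma reg_mul (g : G) (x : MonoidAlgebra ℂ G) :
    Representation.ofMulAction ℂ G G g x = MonoidAlgebra.single g 1 * x := by
  induction x using MonoidAlgebra.induction_linear with
  | zero => rw [map_zero, mul_zero]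
  | add f f' hf hf' => rw [map_add, mul_add, hf, hf']
  | single a b =>
      rw [Representation.ofMulAction_single]
      rw [MonoidAlgebra.single_mul_single, one_mul]
      rfl

instance : FiniteDimensional ℂ (G →₀ ℂ) :=
  Module.Finite.equiv (Finsupp.linearEquivFunOnFinite ℂ ℂ G).symm

lemma central_of_scalar_all (g : G)
    (H : ∀ (W : FDRep ℂ G), Simple W → ∃ u : ℂ, W.ρ g = u • (1 : Module.End ℂ W)) :
    g ∈ Subgroup.center G := by
  haveI : NeZero ((Fintype.card G : ℂ)) := ⟨by exact_mod_cast Fintype.card_ne_zero⟩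
  rw [Subgroup.mem_center_iff]
  intro h
  set c := h * g * h⁻¹ * g⁻¹ with hc
  suffices hc1 : c = 1 by
    have hgh : h * g * h⁻¹ = g := by
      have h2 : h * g * h⁻¹ * g⁻¹ * g = 1 * g := by rw [← hc, hc1]
      rwa [inv_mul_cancel_right, one_mul] at h2
    calc h * g = h * g * h⁻¹ * h := by rw [inv_mul_cancel_right]
      _ = g * h := by rw [hgh]
  set R : FDRep ℂ G := FDRep.of (Representation.ofMulAction ℂ G G) with hR
  have key : ∀ (g' : G) (y : MonoidAlgebra ℂ G),
      R.ρ g' y = MonoidAlgebra.single g' 1 * y := fun g' y => reg_mul g' y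
  -- every simple submodule of the group algebra is fixed pointwise by single c 1
  have hsimple : ∀ (S : Submodule (MonoidAlgebra ℂ G) (MonoidAlgebra ℂ G)), IsSimpleModule (MonoidAlgebra ℂ G) ↥S →
      ∀ x ∈ S, MonoidAlgebra.single c 1 * x = x := by
    intro S hS x hxS
    set p : Submodule ℂ (MonoidAlgebra ℂ G) := S.restrictScalars ℂ with hp
    have hpmem : ∀ y : MonoidAlgebra ℂ G, y ∈ p ↔ y ∈ S := fun y => Iff.rfl
    have hinv : ∀ (g' : G), ∀ y ∈ p, R.ρ g' y ∈ p := by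
      intro g' y hy
      rw [hpmem] at hy ⊢
      rw [key g' y]
      exact S.smul_mem _ hy
    set VS : FDRep ℂ G := FDRep.of (subρ R p hinv) with hVS
    have hSimple : Simple VS := by
      apply simple_of_subspaces
      · haveI := IsSimpleModule.nontrivial (MonoidAlgebra ℂ G) S
        obtain ⟨a, b, hab⟩ := exists_pair_ne (↥S)
        refine ⟨⟨(a : MonoidAlgebra ℂ G), a.2⟩ - ⟨(b : MonoidAlgebra ℂ G), b.2⟩, ?_⟩
        intro hab0
        apply hab
        have : (a : MonoidAlgebra ℂ G) - (b : MonoidAlgebra ℂ G) = 0 := by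
          exact congrArg Subtype.val hab0
        exact Subtype.ext (by rw [sub_eq_zero] at this; exact this)
      · -- invariant subspaces of VS are ⊥ or ⊤
        intro q hq
        -- map q into a ℂ-subspace of the group algebra
        set q' : Submodule ℂ (MonoidAlgebra ℂ G) := q.map p.subtype with hq'
        have hq'le : q' ≤ p := by
          rintro y ⟨z, hz, rfl⟩
          exact z.2
        -- promote q' to a submodule over the group algebra
        have hsmul : ∀ (a : MonoidAlgebra ℂ G), ∀ y ∈ q', a * y ∈ q' := by
          intro a y hy
          induction a using MonoidAlgebra.induction_on with
          | of g' =>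
              obtain ⟨z, hz, rfl⟩ := hy
              have h3 : (MonoidAlgebra.of ℂ G) g' * p.subtype z
                  = p.subtype ((subρ R p hinv) g' z) := by
                rw [MonoidAlgebra.of_apply, ← key g' (p.subtype z)]
                rfl
              exact Submodule.mem_map.mpr ⟨_, hq g' z hz, h3.symm⟩
          | add a b ha hb =>
              rw [add_mul]
              exact q'.add_mem (ha) (hb)
          | smul r a ha =>
              rw [smul_mul_assoc]
              exact q'.smul_mem r ha
        set q'' : Submodule (MonoidAlgebra ℂ G) (MonoidAlgebra ℂ G) :=
          { carrier := (q' : Set (MonoidAlgebra ℂ G))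
            add_mem' := fun h1 h2 => q'.add_mem h1 h2
            zero_mem' := q'.zero_mem
            smul_mem' := fun a {y} hy => by
              rw [smul_eq_mul]
              exact hsmul a y hy } with hq''
        have hq''mem : ∀ y : MonoidAlgebra ℂ G, y ∈ q'' ↔ y ∈ q' := fun y => Iff.rfl
        have hq''le : q'' ≤ S := fun y hy => (hpmem y).mp (hq'le ((hq''mem y).mp hy))
        -- use simplicity of S
        haveI := hS
        rcases eq_bot_or_eq_top (Submodule.comap S.subtype q'') with hr | hr
        · left
          rw [Submodule.eq_bot_iff]
          intro z hz
          have h1 : p.subtype z ∈ q'' := ⟨z, hz, rfl⟩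
          have h1S : p.subtype z ∈ S := hq''le h1
          have h2 : p.subtype z ∈ Submodule.map S.subtype (Submodule.comap S.subtype q'') := by
            rw [Submodule.map_comap_subtype]
            exact ⟨h1S, h1⟩
          rw [hr, Submodule.map_bot] at h2
          simp only [Submodule.mem_bot] at h2
          exact Subtype.ext h2
        · right
          rw [Submodule.eq_top_iff']
          intro z
          have h1 : p.subtype z ∈ S := z.2
          have h2 : (⟨p.subtype z, h1⟩ : ↥S) ∈ (⊤ : Submodule (MonoidAlgebra ℂ G) ↥S) := trivial
          rw [← hr] at h2
          have h3 : p.subtype z ∈ q' := (hq''mem _).mp h2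
          obtain ⟨w, hw, hwz⟩ := Submodule.mem_map.mp h3
          have hwz' : w = z := Subtype.ext (by exact hwz)
          rwa [← hwz']
    -- apply the hypothesis to VS
    obtain ⟨u, hu⟩ := H VS hSimple
    have hscal : ∀ y : MonoidAlgebra ℂ G, y ∈ S → MonoidAlgebra.single g 1 * y = u • y := by
      intro y hy
      have h1 : (subρ R p hinv) g ⟨y, hy⟩ = u • ⟨y, hy⟩ := by
        have := congrArg (fun (f : Module.End ℂ ↥p) => f ⟨y, hy⟩) hu
        exact this
      have h2 := congrArg (Submodule.subtype p) h1
      simp only [Submodule.coe_subtype] at h2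
      rw [← key g y]
      exact h2
    -- now the commutator argument
    have mem1 : MonoidAlgebra.single g⁻¹ (1:ℂ) * x ∈ S := S.smul_mem _ hxS
    have mem2 : MonoidAlgebra.single h⁻¹ (1:ℂ) * (MonoidAlgebra.single g⁻¹ (1:ℂ) * x) ∈ S :=
      S.smul_mem _ mem1
    have e1 : MonoidAlgebra.single g (1:ℂ) * (MonoidAlgebra.single g⁻¹ (1:ℂ) * x)
        = u • (MonoidAlgebra.single g⁻¹ (1:ℂ) * x) := hscal _ mem1
    have e1' : MonoidAlgebra.single g (1:ℂ) * (MonoidAlgebra.single g⁻¹ (1:ℂ) * x) = x := by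
      rw [← mul_assoc, MonoidAlgebra.single_mul_single, mul_inv_cancel, one_mul,
        ← MonoidAlgebra.one_def, one_mul]
    have e2 : MonoidAlgebra.single g (1:ℂ) *
          (MonoidAlgebra.single h⁻¹ (1:ℂ) * (MonoidAlgebra.single g⁻¹ (1:ℂ) * x))
        = u • (MonoidAlgebra.single h⁻¹ (1:ℂ) * (MonoidAlgebra.single g⁻¹ (1:ℂ) * x)) :=
      hscal _ mem2
    calc MonoidAlgebra.single c 1 * x
        = MonoidAlgebra.single h (1:ℂ) * (MonoidAlgebra.single g (1:ℂ) *
            (MonoidAlgebra.single h⁻¹ (1:ℂ) * (MonoidAlgebra.single g⁻¹ (1:ℂ) * x))) := by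
          rw [← mul_assoc, ← mul_assoc, ← mul_assoc, MonoidAlgebra.single_mul_single,
            MonoidAlgebra.single_mul_single, MonoidAlgebra.single_mul_single, hc]
          norm_num
      _ = MonoidAlgebra.single h (1:ℂ) *
            (u • (MonoidAlgebra.single h⁻¹ (1:ℂ) * (MonoidAlgebra.single g⁻¹ (1:ℂ) * x))) := by
          rw [e2]
      _ = u • (MonoidAlgebra.single h (1:ℂ) *
            (MonoidAlgebra.single h⁻¹ (1:ℂ) * (MonoidAlgebra.single g⁻¹ (1:ℂ) * x))) := by
          rw [mul_smul_comm]
      _ = u • (MonoidAlgebra.single g⁻¹ (1:ℂ) * x) := by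
          rw [← mul_assoc, MonoidAlgebra.single_mul_single, mul_inv_cancel, one_mul,
            ← MonoidAlgebra.one_def, one_mul]
      _ = x := by rw [← e1, e1']
  -- conclude c = 1 using semisimplicity
  have htop : sSup {S : Submodule (MonoidAlgebra ℂ G) (MonoidAlgebra ℂ G) |
      IsSimpleModule (MonoidAlgebra ℂ G) S} = ⊤ :=
    IsSemisimpleModule.sSup_simples_eq_top _ _
  have h1 : (1 : MonoidAlgebra ℂ G) ∈ (⊤ : Submodule (MonoidAlgebra ℂ G) (MonoidAlgebra ℂ G)) :=
    trivial
  rw [← htop, sSup_eq_iSup'] at h1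
  have hfix : MonoidAlgebra.single c (1:ℂ) * 1 = 1 := by
    refine Submodule.iSup_induction (motive := fun y => MonoidAlgebra.single c (1:ℂ) * y = y)
      _ h1 ?_ ?_ ?_
    · rintro ⟨S, hs⟩ y hy
      exact hsimple S hs y hy
    · show MonoidAlgebra.single c (1:ℂ) * 0 = 0
      rw [mul_zero]
    · intro y z hy hz
      show MonoidAlgebra.single c (1:ℂ) * (y + z) = y + z
      rw [mul_add, hy, hz]
  rw [mul_one] at hfix
  have : MonoidAlgebra.single c (1:ℂ) = MonoidAlgebra.single 1 (1:ℂ) := by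
    rw [hfix, MonoidAlgebra.one_def]
  rcases MonoidAlgebra.single_inj.mp this with ⟨h1', _⟩ | ⟨h1', _⟩
  · exact h1'
  · exact absurd h1' one_ne_zero

end CharProof

namespace CharProof

variable [Fintype G]

lemma orth (V W : FDRep ℂ G) [Simple V] [Simple W] :
    ∑ g : G, V.character g * W.character g⁻¹
      = if V.character = W.character then (Fintype.card G : ℂ) else 0 := by
  letI hFT : Fintype G := inferInstanceAs (Fintype G)
  letI : Invertible ((Fintype.card (G) : ℂ)) :=
    invertibleOfNonzero (by
      show (Fintype.card G : ℂ) ≠ 0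
      exact_mod_cast (Fintype.card_ne_zero (α := G)))
  have h := FDRep.char_orthonormal (k := ℂ) (G := G) V W
  rw [Nat.card_eq_fintype_card, ← invOf_eq_inv, ← smul_eq_mul] at h
  have hcast : (Fintype.card (G) : ℂ) = (Fintype.card G : ℂ) := rfl
  have hmain : ∀ (v : ℂ),
      (⅟ (Fintype.card (G) : ℂ)) • (∑ g : G, V.character g * W.character g⁻¹) = v
        → ∑ g : G, V.character g * W.character g⁻¹ = (Fintype.card G : ℂ) * v := by
    intro v hv
    calc ∑ g : G, V.character g * W.character g⁻¹
        = (Fintype.card (G) : ℂ) *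
            ((⅟ (Fintype.card (G) : ℂ)) •
              (∑ g : G, V.character g * W.character g⁻¹)) := by
          rw [smul_eq_mul, ← mul_assoc, mul_invOf_self, one_mul]
      _ = (Fintype.card G : ℂ) * v := by rw [hv, hcast]
  by_cases hiso : Nonempty (V ≅ W)
  · rw [if_pos hiso] at h
    rw [if_pos (FDRep.char_iso hiso.some)]
    have := hmain 1 h
    rwa [mul_one] at this
  · rw [if_neg hiso] at h
    have hne : V.character ≠ W.character := by
      intro hEq
      have hVV := FDRep.char_orthonormal (k := ℂ) (G := G) V V
      rw [Nat.card_eq_fintype_card, ← invOf_eq_inv, ← smul_eq_mul] at hVV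
      rw [if_pos ⟨Iso.refl V⟩] at hVV
      rw [← hEq] at h
      exact zero_ne_one ((h.symm.trans hVV) : (0 : ℂ) = 1)
    rw [if_neg hne]
    have := hmain 0 h
    rwa [mul_zero] at this

lemma irr_finite : {χ : G → ℂ | IsIrrChar G χ}.Finite := by
  have hli : LinearIndependent ℂ (fun χ : {χ : G → ℂ | IsIrrChar G χ} => (χ : G → ℂ)) := by
    rw [linearIndependent_iff']
    intro s cf hsum i his
    obtain ⟨V, hV, hVc⟩ := i.2
    haveI := hV
    have happ : ∑ j ∈ s, cf j * (∑ g : G, (j : G → ℂ) g * V.character g⁻¹) = 0 := by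
      have h0 : ∀ g : G, (∑ j ∈ s, cf j • (j : G → ℂ)) g = 0 := fun g => by rw [hsum]; rfl
      have h1 : ∑ g : G, (∑ j ∈ s, cf j • (j : G → ℂ)) g * V.character g⁻¹
          = ∑ j ∈ s, cf j * (∑ g : G, (j : G → ℂ) g * V.character g⁻¹) := by
        calc ∑ g : G, (∑ j ∈ s, cf j • (j : G → ℂ)) g * V.character g⁻¹
            = ∑ g : G, ∑ j ∈ s, cf j * ((j : G → ℂ) g * V.character g⁻¹) := by
              apply Finset.sum_congr rfl
              intro g _
              rw [Finset.sum_apply, Finset.sum_mul]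
              apply Finset.sum_congr rfl
              intro j _
              simp only [Pi.smul_apply, smul_eq_mul]
              ring
          _ = ∑ j ∈ s, ∑ g : G, cf j * ((j : G → ℂ) g * V.character g⁻¹) := Finset.sum_comm
          _ = ∑ j ∈ s, cf j * (∑ g : G, (j : G → ℂ) g * V.character g⁻¹) := by
              apply Finset.sum_congr rfl
              intro j _
              rw [← Finset.mul_sum]
      rw [← h1]
      apply Finset.sum_eq_zero
      intro g _
      rw [h0 g, zero_mul]
    have hdiag : ∀ j ∈ s, j ≠ i →
        cf j * (∑ g : G, (j : G → ℂ) g * V.character g⁻¹) = 0 := by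
      intro j _ hji
      obtain ⟨Wj, hWj, hWjc⟩ := j.2
      haveI := hWj
      have : ∑ g : G, (j : G → ℂ) g * V.character g⁻¹ = 0 := by
        rw [hWjc, orth Wj V, if_neg]
        intro hEq
        apply hji
        apply Subtype.ext
        rw [hWjc, hVc, hEq]
      rw [this, mul_zero]
    rw [Finset.sum_eq_single_of_mem i his hdiag] at happ
    have hself : ∑ g : G, (i : G → ℂ) g * V.character g⁻¹ = (Fintype.card G : ℂ) := by
      rw [hVc, orth V V, if_pos rfl]
    rw [hself] at happ
    rcases mul_eq_zero.mp happ with h | h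
    · exact h
    · exact absurd h (by exact_mod_cast Fintype.card_ne_zero)
  exact hli.setFinite

lemma trivial_simple : Simple (FDRep.of (Representation.trivial ℂ (G := G) (V := ℂ))) := by
  apply simple_of_subspaces
  · exact (⟨1, one_ne_zero⟩ : ∃ v : ℂ, v ≠ 0)
  · intro p _
    let p' : Submodule ℂ ℂ := p
    have : p' = ⊥ ∨ p' = ⊤ := by
      by_cases hp : p' = ⊥
      · exact Or.inl hp
      · right
        obtain ⟨c, hcp, hc0⟩ := Submodule.exists_mem_ne_zero_of_ne_bot hp
        rw [Submodule.eq_top_iff']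
        intro x
        have hx : x = (x * c⁻¹) • c := by
          rw [smul_eq_mul, mul_assoc, inv_mul_cancel₀ hc0, mul_one]
        rw [hx]
        exact p'.smul_mem _ hcp
    exact this

lemma trivial_char :
    (FDRep.of (Representation.trivial ℂ (G := G) (V := ℂ))).character = fun _ => 1 := by
  funext g
  show LinearMap.trace ℂ ℂ (LinearMap.id) = 1
  rw [show (LinearMap.id : ℂ →ₗ[ℂ] ℂ) = 1 from rfl, LinearMap.trace_one, Module.finrank_self]
  norm_num

lemma trivial_irr : IsIrrChar G (fun _ => (1 : ℂ)) :=
  ⟨FDRep.of (Representation.trivial ℂ (G := G) (V := ℂ)), trivial_simple, trivial_char.symm⟩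

end CharProof

namespace CharProof

variable [Fintype G]

open Module

lemma char_bound (V : FDRep ℂ G) (g : G) :
    ‖V.character g‖ ≤ (finrank ℂ V : ℝ) ∧
      (‖V.character g‖ = (finrank ℂ V : ℝ) →
        ∃ u : ℂ, V.ρ g = u • (1 : Module.End ℂ V)) := by
  have h := trace_bound (W := V) (V.ρ g) (k := Fintype.card G) Fintype.card_ne_zero
    (by rw [← map_pow, pow_card_eq_one, map_one])
  exact h

lemma forward_dir {η : G → ℂ} (hη : IsIrrChar G η) (hZ : ∀ z ∈ Subgroup.center G, η z = η 1)
    (hcon : ∀ (n : ℕ) (χ : Fin (n + 1) → G → ℂ), (∀ i, IsIrrChar G (χ i)) →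
      charMult G (fun g => ∏ i, χ i g * (starRingEnd ℂ) (χ i g)) η = 0) : False := by
  classical
  set 𝒳 : Finset (G → ℂ) := (irr_finite (G := G)).toFinset with h𝒳
  have hmem : ∀ χ : G → ℂ, χ ∈ 𝒳 ↔ IsIrrChar G χ := fun χ => Set.Finite.mem_toFinset _
  set θ : G → ℂ := fun g => ∑ χ ∈ 𝒳, χ g * (starRingEnd ℂ) (χ g) with hθ
  have hθreal : ∀ g, θ g = ((∑ χ ∈ 𝒳, Complex.normSq (χ g) : ℝ) : ℂ) := by
    intro g
    calc θ g = ∑ χ ∈ 𝒳, ((Complex.normSq (χ g) : ℝ) : ℂ) :=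
          Finset.sum_congr rfl (fun χ _ => Complex.mul_conj _)
      _ = ((∑ χ ∈ 𝒳, Complex.normSq (χ g) : ℝ) : ℂ) := by push_cast; rfl
  have hθ1 : ∀ g, (1:ℝ) ≤ ∑ χ ∈ 𝒳, Complex.normSq (χ g) := by
    intro g
    have h1 : ((fun _ => (1:ℂ)) : G → ℂ) ∈ 𝒳 := (hmem _).mpr trivial_irr
    have h2 : Complex.normSq (((fun _ => (1:ℂ)) : G → ℂ) g) = 1 := by
      simp
    calc (1:ℝ) = Complex.normSq (((fun _ => (1:ℂ)) : G → ℂ) g) := h2.symm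
      _ ≤ ∑ χ ∈ 𝒳, Complex.normSq (χ g) :=
          Finset.single_le_sum (f := fun χ => Complex.normSq (χ g))
            (fun χ _ => Complex.normSq_nonneg _) h1
  have hθne : ∀ g, θ g ≠ 0 := by
    intro g h
    rw [hθreal g, Complex.ofReal_eq_zero] at h
    linarith [hθ1 g]
  -- Step A: all moments vanish
  have hA : ∀ (m : ℕ), ∑ g : G, θ g ^ (m + 1) * (starRingEnd ℂ) (η g) = 0 := by
    intro m
    have hexp : ∀ g : G, θ g ^ (m+1)
        = ∑ p ∈ Fintype.piFinset (fun _ : Fin (m+1) => 𝒳),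
            ∏ i, (p i) g * (starRingEnd ℂ) ((p i) g) := by
      intro g
      calc θ g ^ (m+1) = ∏ _i : Fin (m+1), θ g := by
            rw [Finset.prod_const, Finset.card_univ, Fintype.card_fin]
        _ = ∑ p ∈ Fintype.piFinset (fun _ : Fin (m+1) => 𝒳),
              ∏ i, (p i) g * (starRingEnd ℂ) ((p i) g) := Finset.prod_univ_sum _ _
    calc ∑ g : G, θ g ^ (m + 1) * (starRingEnd ℂ) (η g)
        = ∑ g : G, ∑ p ∈ Fintype.piFinset (fun _ : Fin (m+1) => 𝒳),
            (∏ i, (p i) g * (starRingEnd ℂ) ((p i) g)) * (starRingEnd ℂ) (η g) := by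
          apply Finset.sum_congr rfl
          intro g _
          rw [hexp g, Finset.sum_mul]
      _ = ∑ p ∈ Fintype.piFinset (fun _ : Fin (m+1) => 𝒳),
            ∑ g : G, (∏ i, (p i) g * (starRingEnd ℂ) ((p i) g)) * (starRingEnd ℂ) (η g) :=
          Finset.sum_comm
      _ = 0 := by
          apply Finset.sum_eq_zero
          intro p hp
          have hirr : ∀ i, IsIrrChar G (p i) := fun i =>
            (hmem _).mp (Fintype.mem_piFinset.mp hp i)
          have hc := hcon m p hirr
          unfold charMult at hc
          rcases mul_eq_zero.mp hc with h | h
          · exact absurd h (inv_ne_zero (by exact_mod_cast Fintype.card_ne_zero))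
          · exact h
  -- the level set of θ at 1 is exactly the center
  have hcenter : ∀ g : G, θ g = θ 1 ↔ g ∈ Subgroup.center G := by
    intro g
    constructor
    · intro hgθ
      apply central_of_scalar_all
      intro W hW
      haveI := hW
      have hsum : ∑ χ ∈ 𝒳, Complex.normSq (χ g) = ∑ χ ∈ 𝒳, Complex.normSq (χ 1) := by
        have h1 := hgθ
        rw [hθreal g, hθreal 1] at h1
        exact_mod_cast h1
      have hle : ∀ χ ∈ 𝒳, Complex.normSq (χ g) ≤ Complex.normSq (χ 1) := by
        intro χ hχ
        obtain ⟨V, hV, rfl⟩ := (hmem χ).mp hχ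
        haveI := hV
        have hb := (char_bound V g).1
        rw [FDRep.char_one]
        rw [← Complex.sq_norm, ← Complex.sq_norm]
        have habs1 : ‖((finrank ℂ V : ℕ) : ℂ)‖ = ((finrank ℂ V : ℕ) : ℝ) := by
          rw [Complex.norm_natCast]
        rw [habs1]
        nlinarith [norm_nonneg (V.character g)]
      have heq : ∀ χ ∈ 𝒳, Complex.normSq (χ g) = Complex.normSq (χ 1) := by
        intro χ hχ
        by_contra hne
        have hlt : Complex.normSq (χ g) < Complex.normSq (χ 1) :=
          lt_of_le_of_ne (hle χ hχ) hne
        have : ∑ χ ∈ 𝒳, Complex.normSq (χ g) < ∑ χ ∈ 𝒳, Complex.normSq (χ 1) :=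
          Finset.sum_lt_sum hle ⟨χ, hχ, hlt⟩
        linarith [hsum]
      have hWmem : W.character ∈ 𝒳 := (hmem _).mpr ⟨W, hW, rfl⟩
      have hWeq := heq _ hWmem
      have habs : ‖W.character g‖ = (finrank ℂ W : ℝ) := by
        rw [FDRep.char_one] at hWeq
        have h2 : (‖W.character g‖) ^ 2 = ((finrank ℂ W : ℕ) : ℝ) ^ 2 := by
          rw [Complex.sq_norm, hWeq, ← Complex.sq_norm, Complex.norm_natCast]
        have h3 := congrArg Real.sqrt h2
        rwa [Real.sqrt_sq (norm_nonneg _), Real.sqrt_sq (by positivity)] at h3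
      exact (char_bound W g).2 habs
    · intro hgZ
      show (∑ χ ∈ 𝒳, χ g * (starRingEnd ℂ) (χ g)) = ∑ χ ∈ 𝒳, χ 1 * (starRingEnd ℂ) (χ 1)
      apply Finset.sum_congr rfl
      intro χ hχ
      obtain ⟨V, hV, rfl⟩ := (hmem χ).mp hχ
      haveI := hV
      obtain ⟨ω, hωmul, hωconj, hωz⟩ := central_char V hgZ
      rw [hωz, map_mul]
      calc ω * V.character 1 * ((starRingEnd ℂ) ω * (starRingEnd ℂ) (V.character 1))
          = (ω * (starRingEnd ℂ) ω) * (V.character 1 * (starRingEnd ℂ) (V.character 1)) := by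
            ring
        _ = V.character 1 * (starRingEnd ℂ) (V.character 1) := by rw [hωconj, one_mul]
  -- Lagrange interpolation setup
  set A₀ : Finset ℂ := Finset.image θ Finset.univ with hA₀
  set r : ℂ → ℂ := fun a => if a = θ 1 then (θ 1)⁻¹ else 0 with hr
  set q : Polynomial ℂ := Polynomial.X * Lagrange.interpolate A₀ id r with hq
  have hq0 : q.coeff 0 = 0 := by
    rw [hq, Polynomial.mul_coeff_zero, Polynomial.coeff_X_zero, zero_mul]
  have hqeval : ∀ g : G, q.eval (θ g) = if θ g = θ 1 then 1 else 0 := by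
    intro g
    rw [hq, Polynomial.eval_mul, Polynomial.eval_X]
    have hnode := Lagrange.eval_interpolate_at_node r (Set.injOn_id _)
      (Finset.mem_image_of_mem θ (Finset.mem_univ g))
    rw [show (id (θ g) : ℂ) = θ g from rfl] at hnode
    rw [hnode]
    simp only [hr]
    by_cases hg : θ g = θ 1
    · rw [if_pos hg, if_pos hg, hg, mul_inv_cancel₀ (hθne 1)]
    · rw [if_neg hg, if_neg hg, mul_zero]
  -- evaluation 1 : zero
  have hSq0 : ∑ g : G, q.eval (θ g) * (starRingEnd ℂ) (η g) = 0 := by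
    calc ∑ g : G, q.eval (θ g) * (starRingEnd ℂ) (η g)
        = ∑ g : G, ∑ i ∈ Finset.range (q.natDegree + 1),
            q.coeff i * θ g ^ i * (starRingEnd ℂ) (η g) := by
          apply Finset.sum_congr rfl
          intro g _
          rw [Polynomial.eval_eq_sum_range, Finset.sum_mul]
      _ = ∑ i ∈ Finset.range (q.natDegree + 1),
            ∑ g : G, q.coeff i * θ g ^ i * (starRingEnd ℂ) (η g) := Finset.sum_comm
      _ = ∑ i ∈ Finset.range (q.natDegree + 1),
            q.coeff i * ∑ g : G, θ g ^ i * (starRingEnd ℂ) (η g) := by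
          apply Finset.sum_congr rfl
          intro i _
          rw [Finset.mul_sum]
          apply Finset.sum_congr rfl
          intro g _
          ring
      _ = 0 := by
          apply Finset.sum_eq_zero
          intro i _
          rcases Nat.eq_zero_or_pos i with h0 | hpos
          · rw [h0, hq0, zero_mul]
          · obtain ⟨m, rfl⟩ : ∃ m, i = m + 1 := ⟨i - 1, by omega⟩
            rw [hA m, mul_zero]
  -- evaluation 2 : a positive multiple of conj (η 1)
  have hSqZ : ∑ g : G, q.eval (θ g) * (starRingEnd ℂ) (η g)
      = ((Finset.univ.filter (fun g : G => g ∈ Subgroup.center G)).card : ℂ)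
          * (starRingEnd ℂ) (η 1) := by
    calc ∑ g : G, q.eval (θ g) * (starRingEnd ℂ) (η g)
        = ∑ g : G, (if g ∈ Subgroup.center G then (1:ℂ) else 0) * (starRingEnd ℂ) (η g) := by
          apply Finset.sum_congr rfl
          intro g _
          rw [hqeval g]
          congr 1
          by_cases hg : g ∈ Subgroup.center G
          · rw [if_pos hg, if_pos ((hcenter g).mpr hg)]
          · rw [if_neg hg, if_neg (fun h => hg ((hcenter g).mp h))]
      _ = ∑ g ∈ Finset.univ.filter (fun g : G => g ∈ Subgroup.center G),
            (starRingEnd ℂ) (η g) := by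
          rw [Finset.sum_filter]
          apply Finset.sum_congr rfl
          intro g _
          rw [ite_mul, one_mul, zero_mul]
      _ = ∑ _g ∈ Finset.univ.filter (fun g : G => g ∈ Subgroup.center G),
            (starRingEnd ℂ) (η 1) := by
          apply Finset.sum_congr rfl
          intro g hg
          rw [hZ g (Finset.mem_filter.mp hg).2]
      _ = ((Finset.univ.filter (fun g : G => g ∈ Subgroup.center G)).card : ℂ)
            * (starRingEnd ℂ) (η 1) := by
          rw [Finset.sum_const, nsmul_eq_mul]
  -- contradiction
  have hcard : ((Finset.univ.filter (fun g : G => g ∈ Subgroup.center G)).card : ℂ) ≠ 0 := by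
    have h1 : (1:G) ∈ Finset.univ.filter (fun g : G => g ∈ Subgroup.center G) :=
      Finset.mem_filter.mpr ⟨Finset.mem_univ 1, Subgroup.one_mem _⟩
    have h2 : 0 < (Finset.univ.filter (fun g : G => g ∈ Subgroup.center G)).card :=
      Finset.card_pos.mpr ⟨1, h1⟩
    exact_mod_cast h2.ne'
  have hη1 : η 1 ≠ 0 := by
    obtain ⟨V, hV, rfl⟩ := hη
    haveI := hV
    rw [FDRep.char_one]
    have h1 := finrank_pos V
    exact_mod_cast h1.ne'
  rw [hSqZ] at hSq0
  rcases mul_eq_zero.mp hSq0 with h | h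
  · exact hcard h
  · exact hη1 (by simpa using h)

end CharProof

/-- An irreducible character `η` of a finite group `G` is trivial on the center `Z(G)`
if and only if it occurs as a constituent of some pointwise product
`χ₁·conj(χ₁) ⋯ χₙ·conj(χₙ)` of irreducible characters with their conjugates.  This
characterizes the representation subring `R_{Z(G)}` as the smallest representation
subring containing all irreducible constituents of the products `χ·χ*`. -/
theorem trivial_on_center_iff_constituent_of_prod_with_conj (G : Type) [Group G]
    [Fintype G] (η : G → ℂ) (hη : IsIrrChar G η) :
    (∀ z ∈ Subgroup.center G, η z = η 1) ↔
      ∃ (n : ℕ) (χ : Fin (n + 1) → G → ℂ), (∀ i, IsIrrChar G (χ i)) ∧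
        charMult G (fun g => ∏ i, χ i g * (starRingEnd ℂ) (χ i g)) η ≠ 0 := by
  constructor
  · intro hZ
    by_contra hcon
    push_neg at hcon
    exact CharProof.forward_dir hη hZ (fun n χ hχ => hcon n χ hχ)
  · rintro ⟨n, χ, hχ, hm⟩
    exact CharProof.backward_dir hη n χ hχ hm
end
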